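/- Let P be a model on (X, A), q : X → [0,∞) integrable with respect to every P ∈ P, and P_q := {P_q : P ∈ P, ∫ q dP > 0} with P_q(A) := (∫_A q dP)/(∫ q dP). If C is complete and sufficient for P, then C is complete and sufficient for P_q. -/

import Mathlib

open MeasureTheory

/-- A sub-σ-algebra `C` of `mX` is (Lehmann–Scheffé) complete for the model `M`:
every `C`-measurable real function, integrable with respect to every member of `M`
and with expectation `0` under every member, vanishes `P`-a.s. for every `P ∈ M`. -/
def IsLSComplete {X : Type*} (mX : MeasurableSpace X) (C : MeasurableSpace X)
    (M : Set (@Measure X mX)) : Prop :=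
  ∀ h : X → ℝ, Measurable[C] h → (∀ P ∈ M, Integrable h P) →
    (∀ P ∈ M, ∫ x, h x ∂P = 0) → ∀ P ∈ M, h =ᵐ[P] 0

/-- A sub-σ-algebra `C` of `mX` is sufficient for the model `M`: for every
`mX`-measurable set `A` there is a single `C`-measurable version of the conditional
probability of `A` given `C`, valid simultaneously for all `P ∈ M`. -/
def IsLSSufficient {X : Type*} (mX : MeasurableSpace X) (C : MeasurableSpace X)
    (M : Set (@Measure X mX)) : Prop :=
  ∀ A : Set X, MeasurableSet[mX] A →
    ∃ g : X → ℝ, Measurable[C] g ∧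
      ∀ P ∈ M, ∀ s : Set X, MeasurableSet[C] s →
        ∫ x in s, g x ∂P = (P (s ∩ A)).toReal

/-- The `q`-weighted version `P_q` of `P`, with `P_q(A) = (∫_A q dP)/(∫ q dP)`. -/
noncomputable def weightedMeasure {X : Type*} [mX : MeasurableSpace X] (P : Measure X)
    (q : X → ℝ) : Measure X :=
  (∫⁻ x, ENNReal.ofReal (q x) ∂P)⁻¹ • P.withDensity (fun x => ENNReal.ofReal (q x))

/-- The `q`-weighted model `M_q = {P_q : P ∈ M, ∫ q dP > 0}`. -/
def weightedModel {X : Type*} [mX : MeasurableSpace X] (M : Set (Measure X))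
    (q : X → ℝ) : Set (Measure X) :=
  {ν | ∃ P ∈ M, (0 < ∫ x, q x ∂P) ∧ ν = weightedMeasure P q}

open scoped ENNReal NNReal

section AuxLS

variable {X : Type*} {C : MeasurableSpace X} [mX : MeasurableSpace X]

lemma null_Icc_of_nonneg_integral {P : Measure X} [IsFiniteMeasure P] {g : X → ℝ}
    (hg : Measurable g) {a b : ℝ} (hb : b < 0)
    (h : 0 ≤ ∫ x in g ⁻¹' Set.Icc a b, g x ∂P) : P (g ⁻¹' Set.Icc a b) = 0 := by
  set v := g ⁻¹' Set.Icc a b with hv_def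
  have hv : MeasurableSet v := hg measurableSet_Icc
  have hint : IntegrableOn g v P := by
    refine Measure.integrableOn_of_bounded (measure_ne_top P v)
      hg.aestronglyMeasurable (M := max |a| |b|) ?_
    filter_upwards [ae_restrict_mem hv] with x hx
    rw [Real.norm_eq_abs]
    exact abs_le_max_abs_abs hx.1 hx.2
  have hle2 : ∫ x in v, g x ∂P ≤ ∫ _ in v, b ∂P := by
    refine setIntegral_mono_on hint (integrableOn_const (measure_ne_top P v)) hv ?_
    exact fun x hx => hx.2
  rw [setIntegral_const, smul_eq_mul, measureReal_def] at hle2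
  have hT : (P v).toReal = 0 := by
    have h0 : 0 ≤ (P v).toReal := ENNReal.toReal_nonneg
    nlinarith [le_trans h hle2]
  exact (ENNReal.toReal_eq_zero_iff _).1 hT |>.resolve_right (measure_ne_top P v)

lemma null_Icc_of_gt_one {P : Measure X} [IsFiniteMeasure P] {g : X → ℝ}
    (hg : Measurable g) {a b : ℝ} (ha : 1 < a)
    (h : ∫ x in g ⁻¹' Set.Icc a b, g x ∂P ≤ (P (g ⁻¹' Set.Icc a b)).toReal) :
    P (g ⁻¹' Set.Icc a b) = 0 := by
  set v := g ⁻¹' Set.Icc a b with hv_def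
  have hv : MeasurableSet v := hg measurableSet_Icc
  have hint : IntegrableOn g v P := by
    refine Measure.integrableOn_of_bounded (measure_ne_top P v)
      hg.aestronglyMeasurable (M := max |a| |b|) ?_
    filter_upwards [ae_restrict_mem hv] with x hx
    rw [Real.norm_eq_abs]
    exact abs_le_max_abs_abs hx.1 hx.2
  have hle2 : ∫ _ in v, a ∂P ≤ ∫ x in v, g x ∂P := by
    refine setIntegral_mono_on (integrableOn_const (measure_ne_top P v)) hint hv ?_
    exact fun x hx => hx.1
  rw [setIntegral_const, smul_eq_mul, measureReal_def] at hle2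
  have hT : (P v).toReal = 0 := by
    have h0 : 0 ≤ (P v).toReal := ENNReal.toReal_nonneg
    nlinarith [le_trans hle2 h]
  exact (ENNReal.toReal_eq_zero_iff _).1 hT |>.resolve_right (measure_ne_top P v)

/-- Upgraded sufficiency: the common conditional probability can be taken `[0,1]`-valued. -/
lemma suff_bounded (M : Set (Measure X))
    (hprob : ∀ P ∈ M, IsProbabilityMeasure P) (hle : C ≤ mX)
    (hsuff : ∀ A : Set X, MeasurableSet A →
      ∃ g : X → ℝ, Measurable[C] g ∧
        ∀ P ∈ M, ∀ s : Set X, MeasurableSet[C] s →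
          ∫ x in s, g x ∂P = (P (s ∩ A)).toReal)
    (A : Set X) (hA : MeasurableSet A) :
    ∃ g : X → ℝ, Measurable[C] g ∧ (∀ x, 0 ≤ g x ∧ g x ≤ 1) ∧
      ∀ P ∈ M, ∀ s : Set X, MeasurableSet[C] s →
        ∫ x in s, g x ∂P = (P (s ∩ A)).toReal := by
  obtain ⟨g, hgm, hg⟩ := hsuff A hA
  have hgm' : Measurable g := hgm.mono hle le_rfl
  refine ⟨fun x => max 0 (min (g x) 1), measurable_const.max (hgm.min measurable_const),
    fun x => ⟨le_max_left _ _, max_le (by norm_num) (min_le_right _ _)⟩, ?_⟩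
  intro P hP s hs
  haveI := hprob P hP
  have cover1 : {x | g x < 0} ⊆ ⋃ n : ℕ, g ⁻¹' Set.Icc (-(n + 1 : ℝ)) (-(1 / (n + 1))) := by
    intro x hx
    simp only [Set.mem_setOf_eq] at hx
    have ht : 0 < -g x := by linarith
    obtain ⟨n, hn⟩ := exists_nat_ge (max (-g x) (1 / (-g x)))
    refine Set.mem_iUnion.2 ⟨n, ?_, ?_⟩
    · have : -g x ≤ n := le_trans (le_max_left _ _) hn
      linarith
    · have h1 : 1 / (-g x) ≤ (n : ℝ) + 1 := by
        have := le_trans (le_max_right _ _) hn; linarith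
      have h2 : 1 / ((n : ℝ) + 1) ≤ -g x := (one_div_le (by positivity) ht).2 h1
      linarith
  have cover2 : {x | 1 < g x} ⊆ ⋃ n : ℕ, g ⁻¹' Set.Icc (1 + 1 / (n + 1)) (n + 2 : ℝ) := by
    intro x hx
    simp only [Set.mem_setOf_eq] at hx
    have ht : 0 < g x - 1 := by linarith
    obtain ⟨n, hn⟩ := exists_nat_ge (max (g x) (1 / (g x - 1)))
    refine Set.mem_iUnion.2 ⟨n, ?_, ?_⟩
    · have h1 : 1 / (g x - 1) ≤ (n : ℝ) + 1 := by
        have := le_trans (le_max_right _ _) hn; linarith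
      have h2 : 1 / ((n : ℝ) + 1) ≤ g x - 1 := (one_div_le (by positivity) ht).2 h1
      linarith
    · have : g x ≤ n := le_trans (le_max_left _ _) hn
      linarith
  have hN1 : P {x | g x < 0} = 0 := by
    refine measure_mono_null cover1 (measure_iUnion_null fun n => ?_)
    have hb : -(1 / ((n : ℝ) + 1)) < 0 := by
      have : (0 : ℝ) < 1 / ((n : ℝ) + 1) := by positivity
      linarith
    refine null_Icc_of_nonneg_integral hgm' hb ?_
    rw [hg P hP _ (hgm measurableSet_Icc)]
    exact ENNReal.toReal_nonneg
  have hN2 : P {x | 1 < g x} = 0 := by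
    refine measure_mono_null cover2 (measure_iUnion_null fun n => ?_)
    have ha : (1 : ℝ) < 1 + 1 / ((n : ℝ) + 1) := by
      have : (0 : ℝ) < 1 / ((n : ℝ) + 1) := by positivity
      linarith
    refine null_Icc_of_gt_one hgm' ha ?_
    rw [hg P hP _ (hgm measurableSet_Icc)]
    exact ENNReal.toReal_mono (measure_ne_top _ _) (measure_mono Set.inter_subset_left)
  have hae : ∀ᵐ x ∂P, 0 ≤ g x ∧ g x ≤ 1 := by
    have h1 : ∀ᵐ x ∂P, 0 ≤ g x := by
      rw [ae_iff]; simpa [not_le] using hN1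
    have h2 : ∀ᵐ x ∂P, g x ≤ 1 := by
      rw [ae_iff]; simpa [not_le] using hN2
    filter_upwards [h1, h2] with x hx1 hx2 using ⟨hx1, hx2⟩
  have heq : ∫ x in s, max 0 (min (g x) 1) ∂P = ∫ x in s, g x ∂P := by
    refine integral_congr_ae (ae_restrict_of_ae ?_)
    filter_upwards [hae] with x hx
    rw [min_eq_left hx.2, max_eq_right hx.1]
  rw [heq, hg P hP s hs]

/-- Common conditional expectation of a simple function. -/
lemma simple_common (M : Set (Measure X))
    (hprob : ∀ P ∈ M, IsProbabilityMeasure P) (hle : C ≤ mX)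
    (hS : ∀ A : Set X, MeasurableSet A →
      ∃ g : X → ℝ, Measurable[C] g ∧ (∀ x, 0 ≤ g x ∧ g x ≤ 1) ∧
        ∀ P ∈ M, ∀ s : Set X, MeasurableSet[C] s →
          ∫ x in s, g x ∂P = (P (s ∩ A)).toReal)
    (u : SimpleFunc X ℝ) :
    ∃ g : X → ℝ, Measurable[C] g ∧ (∀ P ∈ M, Integrable g P) ∧
      ∀ P ∈ M, ∀ t : Set X, MeasurableSet[C] t →
        ∫ x in t, g x ∂P = ∫ x in t, u x ∂P := by
  induction u using SimpleFunc.induction with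
  | const c hs =>
    rename_i s
    obtain ⟨gA, hm, hb, hgA⟩ := hS s hs
    have hint : ∀ P ∈ M, Integrable gA P := by
      intro P hP
      haveI := hprob P hP
      refine Integrable.mono' (integrable_const 1) ((hm.mono hle le_rfl).aestronglyMeasurable) ?_
      refine ae_of_all _ fun x => ?_
      rw [Real.norm_eq_abs, abs_of_nonneg (hb x).1]
      exact (hb x).2
    refine ⟨fun x => c * gA x, hm.const_mul c, fun P hP => ((hint P hP).const_mul c), ?_⟩
    intro P hP t ht
    haveI := hprob P hP
    simp only [SimpleFunc.const_zero, SimpleFunc.coe_piecewise, SimpleFunc.coe_const,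
      SimpleFunc.coe_zero, Set.piecewise_eq_indicator]
    rw [integral_const_mul, hgA P hP t ht, setIntegral_indicator hs]
    simp only [Function.const_apply]
    rw [setIntegral_const, smul_eq_mul, mul_comm, measureReal_def]
  | add hdisj ihf ihg =>
    rename_i f g
    obtain ⟨g₁, hm1, hint1, heq1⟩ := ihf
    obtain ⟨g₂, hm2, hint2, heq2⟩ := ihg
    refine ⟨fun x => g₁ x + g₂ x, hm1.add hm2, fun P hP => (hint1 P hP).add (hint2 P hP), ?_⟩
    intro P hP t ht
    haveI := hprob P hP
    rw [integral_add ((hint1 P hP).integrableOn) ((hint2 P hP).integrableOn),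
      heq1 P hP t ht, heq2 P hP t ht, SimpleFunc.coe_add,
      ← integral_add ((f.integrable_of_isFiniteMeasure (μ := P)).integrableOn)
        ((g.integrable_of_isFiniteMeasure (μ := P)).integrableOn)]
    rfl



/-- Common conditional expectation of a nonnegative measurable, uniformly integrable function. -/
lemma exists_common_condexp (M : Set (Measure X))
    (hprob : ∀ P ∈ M, IsProbabilityMeasure P) (hle : C ≤ mX)
    (hS : ∀ A : Set X, MeasurableSet A →
      ∃ g : X → ℝ, Measurable[C] g ∧ (∀ x, 0 ≤ g x ∧ g x ≤ 1) ∧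
        ∀ P ∈ M, ∀ s : Set X, MeasurableSet[C] s →
          ∫ x in s, g x ∂P = (P (s ∩ A)).toReal)
    (f : X → ℝ) (hf : Measurable f) (hf0 : ∀ x, 0 ≤ f x)
    (hfint : ∀ P ∈ M, Integrable f P) :
    ∃ g : X → ℝ, Measurable[C] g ∧ (∀ x, 0 ≤ g x) ∧
      ∀ P ∈ M, Integrable g P ∧
        ∀ s : Set X, MeasurableSet[C] s → ∫ x in s, g x ∂P = ∫ x in s, f x ∂P := by
  have hf' : Measurable fun x => ENNReal.ofReal (f x) := ENNReal.measurable_ofReal.comp hf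
  set f' : X → ℝ≥0∞ := fun x => ENNReal.ofReal (f x) with hf'_def
  let u : ℕ → SimpleFunc X ℝ := fun n => (SimpleFunc.eapprox f' n).map ENNReal.toReal
  have hu_apply : ∀ n x, u n x = (SimpleFunc.eapprox f' n x).toReal := fun n x =>
    SimpleFunc.map_apply _ _ _
  have hu_eq : ∀ n x, ENNReal.ofReal (u n x) = SimpleFunc.eapprox f' n x := by
    intro n x
    rw [hu_apply, ENNReal.ofReal_toReal (SimpleFunc.eapprox_lt_top f' n x).ne]
  have hu_le : ∀ n x, SimpleFunc.eapprox f' n x ≤ f' x := by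
    intro n x
    rw [← SimpleFunc.iSup_eapprox_apply hf']
    exact le_iSup (fun n => SimpleFunc.eapprox f' n x) n
  have hu_nonneg : ∀ n x, 0 ≤ u n x := fun n x => by
    rw [hu_apply]; exact ENNReal.toReal_nonneg
  have hu_lef : ∀ n x, u n x ≤ f x := by
    intro n x
    have h1 : (SimpleFunc.eapprox f' n x).toReal ≤ (f' x).toReal :=
      ENNReal.toReal_mono ENNReal.ofReal_ne_top (hu_le n x)
    rw [hu_apply]
    simpa [hf'_def, ENNReal.toReal_ofReal (hf0 x)] using h1
  have hu_mono : ∀ n x, u n x ≤ u (n + 1) x := by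
    intro n x
    rw [hu_apply, hu_apply]
    exact ENNReal.toReal_mono (SimpleFunc.eapprox_lt_top f' (n + 1) x).ne
      (SimpleFunc.monotone_eapprox f' (Nat.le_succ n) x)
  choose gn hgn_meas hgn_int hgn_eq using fun n => simple_common M hprob hle hS (u n)
  have hG_meas : Measurable[C] fun x => ⨆ n, ENNReal.ofReal (gn n x) :=
    Measurable.iSup fun n => ENNReal.measurable_ofReal.comp (hgn_meas n)
  have hGmeas' : Measurable fun x => ⨆ n, ENNReal.ofReal (gn n x) := hG_meas.mono hle le_rfl
  refine ⟨fun x => (⨆ n, ENNReal.ofReal (gn n x)).toReal, hG_meas.ennreal_toReal,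
    fun x => ENNReal.toReal_nonneg, ?_⟩
  intro P hP
  haveI := hprob P hP
  haveI : SigmaFinite (P.trim hle) := inferInstance
  have hu_int : ∀ n, Integrable (u n) P := fun n =>
    SimpleFunc.integrable_of_isFiniteMeasure (μ := P) _
  have hcond : ∀ n, gn n =ᵐ[P] P[(u n : X → ℝ)|C] := by
    intro n
    exact ae_eq_condExp_of_forall_setIntegral_eq hle (hu_int n)
      (fun s hs _ => (hgn_int n P hP).integrableOn)
      (fun s hs _ => hgn_eq n P hP s hs)
      ((hgn_meas n).stronglyMeasurable.aestronglyMeasurable)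
  have hmono : ∀ᵐ x ∂P, ∀ n, gn n x ≤ gn (n + 1) x := by
    rw [ae_all_iff]
    intro n
    have h3 : P[(u n : X → ℝ)|C] ≤ᵐ[P] P[(u (n + 1) : X → ℝ)|C] :=
      condExp_mono (hu_int n) (hu_int (n + 1)) (ae_of_all _ (hu_mono n))
    filter_upwards [hcond n, hcond (n + 1), h3] with x e1 e2 e3
    rw [e1, e2]; exact e3
  have hnn : ∀ᵐ x ∂P, ∀ n, 0 ≤ gn n x := by
    rw [ae_all_iff]
    intro n
    have h3 : 0 ≤ᵐ[P] P[(u n : X → ℝ)|C] :=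
      condExp_nonneg (ae_of_all _ (hu_nonneg n))
    filter_upwards [hcond n, h3] with x e1 e3
    rw [e1]; exact e3
  have key : ∀ s : Set X, MeasurableSet[C] s →
      ∫⁻ x in s, (⨆ n, ENNReal.ofReal (gn n x)) ∂P = ENNReal.ofReal (∫ x in s, f x ∂P) := by
    intro s hs
    have hs' : MeasurableSet s := hle s hs
    have step1 : ∫⁻ x in s, (⨆ n, ENNReal.ofReal (gn n x)) ∂P
        = ⨆ n, ∫⁻ x in s, ENNReal.ofReal (gn n x) ∂P := by
      refine lintegral_iSup'
        (fun n => (ENNReal.measurable_ofReal.comp ((hgn_meas n).mono hle le_rfl)).aemeasurable)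
        (ae_restrict_of_ae ?_)
      filter_upwards [hmono] with x hx
      exact monotone_nat_of_le_succ fun n => ENNReal.ofReal_le_ofReal (hx n)
    have step2 : ∀ n, ∫⁻ x in s, ENNReal.ofReal (gn n x) ∂P
        = ∫⁻ x in s, SimpleFunc.eapprox f' n x ∂P := by
      intro n
      rw [← ofReal_integral_eq_lintegral_ofReal ((hgn_int n P hP).integrableOn)
        (ae_restrict_of_ae (hnn.mono fun x hx => hx n)), hgn_eq n P hP s hs,
        ofReal_integral_eq_lintegral_ofReal ((hu_int n).integrableOn)
        (ae_restrict_of_ae (ae_of_all _ (hu_nonneg n)))]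
      exact lintegral_congr fun x => hu_eq n x
    have step4 : (⨆ n, ∫⁻ x in s, SimpleFunc.eapprox f' n x ∂P) = ∫⁻ x in s, f' x ∂P := by
      rw [← lintegral_iSup (fun n => (SimpleFunc.eapprox f' n).measurable)
        (fun n m hnm x => SimpleFunc.monotone_eapprox f' hnm x)]
      exact lintegral_congr fun x => SimpleFunc.iSup_eapprox_apply hf' x
    have step5 : ∫⁻ x in s, f' x ∂P = ENNReal.ofReal (∫ x in s, f x ∂P) :=
      (ofReal_integral_eq_lintegral_ofReal ((hfint P hP).integrableOn)
        (ae_restrict_of_ae (ae_of_all _ hf0))).symm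
    rw [step1, iSup_congr step2, step4, step5]
  have htop : ∫⁻ x, (⨆ n, ENNReal.ofReal (gn n x)) ∂P ≠ ∞ := by
    have h := key Set.univ MeasurableSet.univ
    rw [setLIntegral_univ] at h
    rw [h]; exact ENNReal.ofReal_ne_top
  constructor
  · exact integrable_toReal_of_lintegral_ne_top hGmeas'.aemeasurable htop
  · intro s hs
    have hs' : MeasurableSet s := hle s hs
    have h1 : ∫ x in s, (⨆ n, ENNReal.ofReal (gn n x)).toReal ∂P
        = (∫⁻ x in s, (⨆ n, ENNReal.ofReal (gn n x)) ∂P).toReal := by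
      refine integral_toReal hGmeas'.aemeasurable.restrict (ae_restrict_of_ae ?_)
      exact ae_lt_top hGmeas' htop
    rw [h1, key s hs, ENNReal.toReal_ofReal (setIntegral_nonneg hs' fun x _ => hf0 x)]



/-- Identification of a common conditional expectation with `condexp`. -/
lemma ae_eq_condexp_of_common {P : Measure X} [IsProbabilityMeasure P] (hle : C ≤ mX)
    {g f : X → ℝ} (hgmeas : Measurable[C] g) (hgint : Integrable g P)
    (hfint : Integrable f P)
    (h : ∀ s : Set X, MeasurableSet[C] s → ∫ x in s, g x ∂P = ∫ x in s, f x ∂P) :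
    g =ᵐ[P] P[f|C] := by
  haveI : SigmaFinite (P.trim hle) := inferInstance
  exact ae_eq_condExp_of_forall_setIntegral_eq hle hfint
    (fun s hs _ => hgint.integrableOn) (fun s hs _ => h s hs)
    (hgmeas.stronglyMeasurable.aestronglyMeasurable)

/-- Main auxiliary lemma, with convenient variable order. -/
lemma complete_sufficient_of_weighted_aux (M : Set (Measure X))
    (hprob : ∀ P ∈ M, IsProbabilityMeasure P)
    (q : X → ℝ) (hqmeas : Measurable q) (hq0 : ∀ x, 0 ≤ q x)
    (hqint : ∀ P ∈ M, Integrable q P)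
    (hle : C ≤ mX)
    (hcompl : IsLSComplete mX C M) (hsuff : IsLSSufficient mX C M) :
    IsLSComplete mX C (weightedModel (mX := mX) M q) ∧
      IsLSSufficient mX C (weightedModel (mX := mX) M q) := by
  -- upgraded sufficiency
  have hS := suff_bounded M hprob hle hsuff
  -- common conditional expectation of `q`
  obtain ⟨gq, hgq_meas, hgq_nonneg, hgq⟩ :=
    exists_common_condexp M hprob hle hS q hqmeas hq0 hqint
  have hgq_meas' : Measurable gq := hgq_meas.mono hle le_rfl
  -- basic computations about the weighted measures
  have hw : Measurable fun x => (q x).toNNReal := measurable_real_toNNReal.comp hqmeas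
  have hofq : Measurable fun x => ENNReal.ofReal (q x) := ENNReal.measurable_ofReal.comp hqmeas
  have hcrep : ∀ P ∈ M, (∫⁻ x, ENNReal.ofReal (q x) ∂P) = ENNReal.ofReal (∫ x, q x ∂P) :=
    fun P hP => (ofReal_integral_eq_lintegral_ofReal (hqint P hP) (ae_of_all _ hq0)).symm
  have hcfact : ∀ P ∈ M, 0 < ∫ x, q x ∂P →
      (∫⁻ x, ENNReal.ofReal (q x) ∂P) ≠ 0 ∧ (∫⁻ x, ENNReal.ofReal (q x) ∂P) ≠ ∞ := by
    intro P hP hqpos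
    rw [hcrep P hP]
    exact ⟨(ENNReal.ofReal_pos.2 hqpos).ne', ENNReal.ofReal_ne_top⟩
  have hInt : ∀ (P : Measure X), ∀ s : Set X, MeasurableSet s → ∀ u : X → ℝ,
      ∫ x in s, u x ∂(weightedMeasure P q)
        = (∫⁻ x, ENNReal.ofReal (q x) ∂P)⁻¹.toReal * ∫ x in s, q x * u x ∂P := by
    intro P s hs u
    rw [weightedMeasure, Measure.restrict_smul, integral_smul_measure,
      restrict_withDensity hs]
    have hrw : (fun x => ENNReal.ofReal (q x)) = fun x => ((q x).toNNReal : ℝ≥0∞) := rfl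
    rw [hrw, integral_withDensity_eq_integral_smul hw u, smul_eq_mul]
    congr 1
    refine integral_congr_ae (ae_of_all _ fun x => ?_)
    simp [NNReal.smul_def, Real.coe_toNNReal _ (hq0 x)]
  have hMeas : ∀ P ∈ M, ∀ t : Set X, MeasurableSet t →
      weightedMeasure P q t
        = (∫⁻ x, ENNReal.ofReal (q x) ∂P)⁻¹ * ENNReal.ofReal (∫ x in t, q x ∂P) := by
    intro P hP t ht
    rw [weightedMeasure, Measure.smul_apply, withDensity_apply _ ht, smul_eq_mul]
    congr 1
    rw [← ofReal_integral_eq_lintegral_ofReal ((hqint P hP).integrableOn)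
      (ae_restrict_of_ae (ae_of_all _ hq0))]
  constructor
  · -- Completeness
    intro h hmeas hint hzero
    have hH_meas : Measurable[C] fun x => h x * gq x := hmeas.mul hgq_meas
    have hHP : ∀ P ∈ M, Integrable (fun x => h x * gq x) P ∧ ∫ x, h x * gq x ∂P = 0 := by
      intro P hP
      haveI := hprob P hP
      haveI : SigmaFinite (P.trim hle) := inferInstance
      obtain ⟨hgq_int, hgq_eq⟩ := hgq P hP
      have hgq_ce : gq =ᵐ[P] P[q|C] :=
        ae_eq_condexp_of_common hle hgq_meas hgq_int (hqint P hP) hgq_eq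
      rcases lt_or_eq_of_le (integral_nonneg (μ := P) (f := q) hq0) with hqpos | hq0'
      · -- `∫ q dP > 0`
        obtain ⟨hc0, hctop⟩ := hcfact P hP hqpos
        have hν : weightedMeasure P q ∈ weightedModel (mX := mX) M q := ⟨P, hP, hqpos, rfl⟩
        have hQint : Integrable (fun x => h x * q x) P := by
          have h1 := hint _ hν
          rw [weightedMeasure] at h1
          have h2 : Integrable h (P.withDensity fun x => ENNReal.ofReal (q x)) :=
            (integrable_smul_measure (ENNReal.inv_ne_zero.2 hctop)
              (ENNReal.inv_ne_top.2 hc0)).1 h1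
          have hrw : (fun x => ENNReal.ofReal (q x)) = fun x => ((q x).toNNReal : ℝ≥0∞) := rfl
          rw [hrw] at h2
          have h3 := (integrable_withDensity_iff_integrable_smul hw).1 h2
          refine h3.congr (ae_of_all _ fun x => ?_)
          simp [NNReal.smul_def, Real.coe_toNNReal _ (hq0 x), mul_comm]
        have hQzero : ∫ x, h x * q x ∂P = 0 := by
          have h0 := hzero _ hν
          have h1 := hInt P Set.univ MeasurableSet.univ h
          rw [setIntegral_univ, setIntegral_univ, h0] at h1
          have hpos : 0 < (∫⁻ x, ENNReal.ofReal (q x) ∂P)⁻¹.toReal :=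
            ENNReal.toReal_pos (ENNReal.inv_ne_zero.2 hctop) (ENNReal.inv_ne_top.2 hc0)
          have h2 : ∫ x, q x * h x ∂P = 0 := by
            rcases mul_eq_zero.1 h1.symm with h' | h'
            · exact absurd h' hpos.ne'
            · exact h'
          rw [← h2]
          exact integral_congr_ae (ae_of_all _ fun x => mul_comm _ _)
        have hpull : P[(fun x => h x * q x)|C] =ᵐ[P] fun x => h x * (P[q|C]) x := by
          have := condExp_mul_of_stronglyMeasurable_left (m := C) (μ := P)
            hmeas.stronglyMeasurable (by exact hQint) (hqint P hP)
          exact this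
        have hHae : (fun x => h x * gq x) =ᵐ[P] P[(fun x => h x * q x)|C] := by
          filter_upwards [hpull, hgq_ce] with x e1 e2
          rw [e1, e2]
        refine ⟨integrable_condExp.congr hHae.symm, ?_⟩
        rw [integral_congr_ae hHae, integral_condExp hle, hQzero]
      · -- `∫ q dP = 0`
        have hqa : q =ᵐ[P] 0 :=
          (integral_eq_zero_iff_of_nonneg hq0 (hqint P hP)).1 hq0'.symm
        have hgq0 : gq =ᵐ[P] 0 := by
          refine hgq_ce.trans ((condExp_congr_ae hqa).trans ?_)
          rw [condExp_zero]
        have hH0 : (fun x => h x * gq x) =ᵐ[P] 0 := by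
          filter_upwards [hgq0] with x hx
          simp [hx]
        refine ⟨(integrable_zero _ _ _).congr hH0.symm, ?_⟩
        rw [integral_congr_ae hH0]
        simp
    have hH := hcompl (fun x => h x * gq x) hH_meas
      (fun P hP => (hHP P hP).1) (fun P hP => (hHP P hP).2)
    rintro ν ⟨P, hP, hqpos, rfl⟩
    haveI := hprob P hP
    obtain ⟨hgq_int, hgq_eq⟩ := hgq P hP
    have hSmeasC : MeasurableSet[C] (gq ⁻¹' {0}) := hgq_meas (measurableSet_singleton 0)
    have hSmeas : MeasurableSet (gq ⁻¹' {0}) := hle _ hSmeasC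
    have hqS : ∀ᵐ x ∂P, gq x = 0 → q x = 0 := by
      have h0 : ∫ x in gq ⁻¹' {0}, q x ∂P = 0 := by
        rw [← hgq_eq _ hSmeasC]
        have hz : ∀ᵐ x ∂P.restrict (gq ⁻¹' {0}), gq x = 0 := by
          filter_upwards [ae_restrict_mem hSmeas] with x hx using hx
        rw [integral_congr_ae hz, integral_zero]
      have hq_res : ∀ᵐ x ∂P.restrict (gq ⁻¹' {0}), q x = 0 :=
        (integral_eq_zero_iff_of_nonneg hq0 ((hqint P hP).integrableOn)).1 h0
      exact (ae_restrict_iff' hSmeas).1 hq_res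
    have hae : ∀ᵐ x ∂(P.withDensity fun x => ENNReal.ofReal (q x)), h x = 0 := by
      rw [ae_withDensity_iff hofq]
      filter_upwards [hH P hP, hqS] with x h1 h2
      intro hne
      have hqx : q x ≠ 0 := by
        intro h'
        exact hne (by simp [h'])
      have hgqx : gq x ≠ 0 := fun h' => hqx (h2 h')
      have h1' : h x * gq x = 0 := h1
      exact (mul_eq_zero.1 h1').resolve_right hgqx
    show h =ᵐ[weightedMeasure P q] 0
    rw [weightedMeasure]
    exact Measure.ae_smul_measure hae _
  · -- Sufficiency
    intro A hA
    obtain ⟨gA, hgA_meas, hgA_nonneg, hgA⟩ :=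
      exists_common_condexp M hprob hle hS (fun x => A.indicator q x)
        (hqmeas.indicator hA) (fun x => Set.indicator_nonneg (fun y _ => hq0 y) x)
        (fun P hP => (hqint P hP).indicator hA)
    refine ⟨fun x => max 0 (min (gA x / gq x) 1),
      measurable_const.max ((hgA_meas.div hgq_meas).min measurable_const), ?_⟩
    rintro ν ⟨P, hP, hqpos, rfl⟩ s hs
    haveI := hprob P hP
    haveI : SigmaFinite (P.trim hle) := inferInstance
    obtain ⟨hc0, hctop⟩ := hcfact P hP hqpos
    obtain ⟨hgq_int, hgq_eq⟩ := hgq P hP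
    obtain ⟨hgA_int, hgA_eq⟩ := hgA P hP
    have hgq_ce : gq =ᵐ[P] P[q|C] :=
      ae_eq_condexp_of_common hle hgq_meas hgq_int (hqint P hP) hgq_eq
    have hgA_ce : gA =ᵐ[P] P[(fun x => A.indicator q x)|C] :=
      ae_eq_condexp_of_common hle hgA_meas hgA_int ((hqint P hP).indicator hA) hgA_eq
    have hle_ae : gA ≤ᵐ[P] gq := by
      have hmono := condExp_mono (m := C) ((hqint P hP).indicator hA) (hqint P hP)
        (ae_of_all _ fun x => Set.indicator_le_self' (fun y _ => hq0 y) x)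
      filter_upwards [hgq_ce, hgA_ce, hmono] with x e1 e2 e3
      rw [e1, e2]; exact e3
    have hprod : ∀ᵐ x ∂P, max 0 (min (gA x / gq x) 1) * gq x = gA x := by
      filter_upwards [hle_ae] with x hxle
      rcases eq_or_lt_of_le (hgq_nonneg x) with h0 | h0
      · have hA0 : gA x = 0 := le_antisymm (h0 ▸ hxle) (hgA_nonneg x)
        rw [← h0, mul_zero, hA0]
      · have hr0 : 0 ≤ gA x / gq x := div_nonneg (hgA_nonneg x) h0.le
        have hr1 : gA x / gq x ≤ 1 := (div_le_one h0).2 hxle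
        rw [min_eq_left hr1, max_eq_right hr0, div_mul_cancel₀ _ h0.ne']
    have hbd_meas : Measurable fun x => max 0 (min (gA x / gq x) 1) :=
      (measurable_const.max ((hgA_meas.div hgq_meas).min measurable_const)).mono hle le_rfl
    have hg'bd : ∀ x, ‖max 0 (min (gA x / gq x) 1)‖ ≤ 1 := by
      intro x
      rw [Real.norm_eq_abs, abs_of_nonneg (le_max_left _ _)]
      exact max_le zero_le_one (min_le_right _ _)
    have hg'int : Integrable ((fun x => max 0 (min (gA x / gq x) 1)) * q) P :=
      Integrable.bdd_mul (hqint P hP) hbd_meas.aestronglyMeasurable (ae_of_all _ hg'bd)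
    have hpull : P[(fun x => max 0 (min (gA x / gq x) 1)) * q|C]
        =ᵐ[P] (fun x => max 0 (min (gA x / gq x) 1)) * P[q|C] :=
      condExp_mul_of_stronglyMeasurable_left
        ((measurable_const.max ((hgA_meas.div hgq_meas).min measurable_const)).stronglyMeasurable)
        hg'int (hqint P hP)
    have hcondeq : ∀ᵐ x ∂P, (P[(fun x => max 0 (min (gA x / gq x) 1)) * q|C]) x = gA x := by
      filter_upwards [hpull, hgq_ce, hprod] with x e1 e2 e3
      rw [e1]
      show max 0 (min (gA x / gq x) 1) * (P[q|C]) x = gA x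
      rw [← e2]; exact e3
    have key : ∫ x in s, max 0 (min (gA x / gq x) 1) * q x ∂P
        = ∫ x in s, A.indicator q x ∂P := by
      have h1 : ∫ x in s, max 0 (min (gA x / gq x) 1) * q x ∂P
          = ∫ x in s, (P[(fun x => max 0 (min (gA x / gq x) 1)) * q|C]) x ∂P :=
        (setIntegral_condExp hle hg'int hs).symm
      rw [h1, integral_congr_ae (ae_restrict_of_ae hcondeq), hgA_eq s hs]
    -- final computation
    rw [hInt P s (hle s hs) _, hMeas P hP (s ∩ A) ((hle s hs).inter hA)]
    have hmc : ∫ x in s, q x * max 0 (min (gA x / gq x) 1) ∂P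
        = ∫ x in s, A.indicator q x ∂P := by
      rw [← key]
      exact integral_congr_ae (ae_of_all _ fun x => mul_comm _ _)
    rw [hmc, setIntegral_indicator hA, ENNReal.toReal_mul,
      ENNReal.toReal_ofReal (setIntegral_nonneg ((hle s hs).inter hA) fun x _ => hq0 x)]

end AuxLS

/-- **Lemma (Smith, 1957; permanence of complete sufficiency under weighing).**
If `C` is complete and sufficient for `M`, then `C` is complete and sufficient for the
weighted model `M_q`. -/
theorem complete_sufficient_of_weighted
    {X : Type*} [mX : MeasurableSpace X] (M : Set (Measure X))
    (hprob : ∀ P ∈ M, IsProbabilityMeasure P)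
    (q : X → ℝ) (hqmeas : Measurable q) (hq0 : ∀ x, 0 ≤ q x)
    (hqint : ∀ P ∈ M, Integrable q P)
    (C : MeasurableSpace X) (hle : C ≤ mX)
    (hcompl : IsLSComplete mX C M) (hsuff : IsLSSufficient mX C M) :
    IsLSComplete mX C (weightedModel (mX := mX) M q) ∧
      IsLSSufficient mX C (weightedModel (mX := mX) M q) :=
  complete_sufficient_of_weighted_aux (C := C) (mX := mX) M hprob q hqmeas hq0 hqint hle hcompl hsuff
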